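/- Let Γ: A = ⊕_{g∈G} A_g and Γ̄: A = ⊕_{h∈H} Ā_h be gradings of an algebra A by abelian groups G and H, each generated by the support of its respective grading, over an algebraically closed field of characteristic p, with neither G nor H containing elements of order p. If η_{Γ̄}(Ĥ) ⊆ η_Γ(Ĝ) (where η sends characters to the corresponding diagonal automorphisms), then Γ̄ is a coarsening of Γ: there is a group homomorphism φ: G → H with Ā_{φ(g)} ⊇ A_g for all g in the support of Γ, and φ maps the support of Γ onto the support of Γ̄. -/

import Mathlib

attribute [local instance] Classical.propDecidable

universe uF uH

open DirectSum in
private lemma comp_scalar {F A ι : Type*} [Field F] [AddCommGroup A] [Module F A]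
    (𝒟 : ι → Submodule F A) [Decomposition 𝒟] (e : A →ₗ[F] A)
    (c : ι → F) (hc : ∀ (i : ι) (y : A), y ∈ 𝒟 i → e y = c i • y)
    {a : F} {x : A} (hx : e x = a • x) {i : ι} (hi : decompose 𝒟 x i ≠ 0) :
    c i = a := by
  classical
  set s := (decompose 𝒟 x).support with hs
  have hmem : i ∈ s := DFinsupp.mem_support_iff.mpr hi
  have hxsum : (∑ j ∈ s, ((decompose 𝒟 x j : A))) = x := sum_support_decompose 𝒟 x
  have h2 : (∑ j ∈ s, ((c j - a) • ((decompose 𝒟 x j : A)))) = 0 := by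
    have e1 : (∑ j ∈ s, (c j • ((decompose 𝒟 x j : A)))) = e x := by
      conv_rhs => rw [← hxsum]
      rw [map_sum]
      exact Finset.sum_congr rfl fun j _ => (hc j _ (decompose 𝒟 x j).2).symm
    have e2 : (∑ j ∈ s, (a • ((decompose 𝒟 x j : A)))) = a • x := by
      rw [← Finset.smul_sum, hxsum]
    calc (∑ j ∈ s, ((c j - a) • ((decompose 𝒟 x j : A))))
        = (∑ j ∈ s, (c j • ((decompose 𝒟 x j : A)))) -
            (∑ j ∈ s, (a • ((decompose 𝒟 x j : A)))) := by
          rw [← Finset.sum_sub_distrib]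
          exact Finset.sum_congr rfl fun j _ => sub_smul _ _ _
      _ = e x - a • x := by rw [e1, e2]
      _ = 0 := by rw [hx, sub_self]
  have h3 : (∑ j ∈ s, (DirectSum.of (fun i => 𝒟 i) j ((c j - a) • (decompose 𝒟 x j)))) = 0 := by
    have h4 : decompose 𝒟 (∑ j ∈ s, ((c j - a) • ((decompose 𝒟 x j : A)))) = 0 := by
      rw [h2, decompose_zero]
    rw [decompose_sum] at h4
    rw [← h4]
    refine Finset.sum_congr rfl fun j _ => ?_
    rw [← decompose_coe]
    congr 1
  have h4 : (∑ j ∈ s, (DirectSum.of (fun i => 𝒟 i) j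
      ((c j - a) • (decompose 𝒟 x j)))) i = 0 := by rw [h3]; rfl
  rw [DFinsupp.finset_sum_apply] at h4
  have h5 := Finset.sum_eq_single_of_mem
    (f := fun j => ((DirectSum.of (fun i => 𝒟 i) j ((c j - a) • (decompose 𝒟 x j))) i))
    i hmem (fun j _ hj => DirectSum.of_eq_of_ne _ _ _ hj.symm)
  have h6 := h5.symm.trans h4
  simp only [DirectSum.of_eq_same] at h6
  rcases smul_eq_zero.mp h6 with h | h
  · exact sub_eq_zero.mp h
  · exact absurd h hi

open DirectSum in
private lemma comp_exists {F A ι : Type*} [Field F] [AddCommGroup A] [Module F A]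
    (𝒟 : ι → Submodule F A) [Decomposition 𝒟]
    (x : A) (hx : x ≠ 0) : ∃ i, decompose 𝒟 x i ≠ 0 := by
  by_contra hcon
  push_neg at hcon
  apply hx
  apply (decompose 𝒟).injective
  rw [decompose_zero]
  exact DFinsupp.ext fun i => hcon i

open DirectSum in
private lemma mem_of_comp {F A ι : Type*} [Field F] [AddCommGroup A] [Module F A]
    (𝒟 : ι → Submodule F A) [Decomposition 𝒟] {x : A} {i : ι}
    (hx : ∀ j, j ≠ i → decompose 𝒟 x j = 0) : x ∈ 𝒟 i := by
  classical
  rw [← sum_support_decompose 𝒟 x]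
  refine Submodule.sum_mem _ fun j _ => ?_
  rcases eq_or_ne j i with rfl | hne
  · exact (decompose 𝒟 x j).2
  · rw [hx j hne]
    simp

private lemma exists_char (F : Type uF) [Field F] [IsAlgClosed F] {p : ℕ} [CharP F p]
    (hp : p.Prime) {H : Type uH} [CommGroup H] (hHp : ∀ h : H, orderOf h ≠ p)
    {h : H} (hh : h ≠ 1) : ∃ χ : H →* Fˣ, χ h ≠ 1 := by
  classical
  obtain ⟨m, hm0, hm1, hmp, hdvd⟩ :
      ∃ m : ℕ, m ≠ 0 ∧ m ≠ 1 ∧ ¬ p ∣ m ∧ ∀ k : ℤ, h ^ k = 1 → (m : ℤ) ∣ k := by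
    rcases Nat.eq_zero_or_pos (orderOf h) with hn | hn
    · obtain ⟨q, hqle, hq⟩ := Nat.exists_infinite_primes (p + 1)
      refine ⟨q, hq.ne_zero, hq.ne_one, ?_, ?_⟩
      · intro hpq
        rw [Nat.prime_dvd_prime_iff_eq hp hq] at hpq
        omega
      · intro k hk
        have h1 : (orderOf h : ℤ) ∣ k := orderOf_dvd_iff_zpow_eq_one.mpr hk
        rw [hn] at h1
        obtain rfl := zero_dvd_iff.mp (by exact_mod_cast h1)
        exact dvd_zero _
    · have hpn : ¬ p ∣ orderOf h := by
        intro hd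
        obtain ⟨k, hk⟩ := hd
        have hk0 : k ≠ 0 := by
          rintro rfl
          rw [mul_zero] at hk
          omega
        have horder : orderOf (h ^ k) = p := by
          rw [orderOf_pow' h hk0, hk, Nat.gcd_eq_right ⟨p, by rw [mul_comm]⟩,
            Nat.mul_div_cancel _ (Nat.pos_of_ne_zero hk0)]
        exact hHp _ horder
      refine ⟨orderOf h, hn.ne', ?_, hpn,
        fun k hk => orderOf_dvd_iff_zpow_eq_one.mpr hk⟩
      intro h1
      exact hh (orderOf_eq_one_iff.mp h1)
  have hmF : (m : F) ≠ 0 := fun h0 => hmp ((CharP.cast_eq_zero_iff F p m).mp h0)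
  haveI : NeZero ((m : F)) := ⟨hmF⟩
  obtain ⟨ζ, hζ⟩ := HasEnoughRootsOfUnity.exists_primitiveRoot F m
  have hmpos : 0 < m := Nat.pos_of_ne_zero hm0
  set u : Fˣ := (hζ.isUnit hm0).unit with hu
  have hζu : IsPrimitiveRoot u m := hζ.isUnit_unit hm0
  have hu1 : u ≠ 1 := by
    intro h1
    exact hm1 (Nat.dvd_one.mp (hζu.dvd_of_pow_eq_one 1 (by rw [h1, one_pow])))
  have hupow : ∀ k : ℤ, (m : ℤ) ∣ k → u ^ k = 1 := by
    rintro k ⟨t, rfl⟩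
    rw [zpow_mul, zpow_natCast, hζu.pow_eq_one, one_zpow]
  haveI : RootableBy Fˣ ℕ := rootableByOfPowLeftSurj _ _ (fun {n} hn a => by
    obtain ⟨z, hz⟩ := IsAlgClosed.exists_pow_nat_eq (a : F) (Nat.pos_of_ne_zero hn)
    have hz0 : z ≠ 0 := fun h0 => (Units.ne_zero a) (by rw [← hz, h0, zero_pow hn])
    exact ⟨Units.mk0 z hz0, Units.ext (by rw [Units.val_pow_eq_pow_val]; simpa using hz)⟩)
  haveI : RootableBy Fˣ ℤ := Group.rootableByIntOfRootableByNat Fˣ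
  haveI : DivisibleBy (Additive Fˣ) ℤ :=
    { div := fun a n => Additive.ofMul (RootableBy.root a.toMul n)
      div_zero := fun a => by
        show Additive.ofMul (RootableBy.root a.toMul (0 : ℤ)) = 0
        rw [RootableBy.root_zero]
        rfl
      div_cancel := fun {n} a hn => by
        show n • Additive.ofMul (RootableBy.root a.toMul n) = a
        rw [← ofMul_zpow, RootableBy.root_cancel _ hn]
        rfl }
  haveI inj1 : Module.Injective ℤ (Additive Fˣ) :=
    Module.Baer.injective (Module.Baer.of_divisible _)
  haveI inj2 : Module.Injective ℤ (ULift.{uH} (Additive Fˣ)) :=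
    Module.ulift_injective_of_injective _ inj1
  let Y : Type (max uF uH) := ULift.{uF} (Additive H)
  let Q : Type (max uF uH) := ULift.{uH} (Additive Fˣ)
  let a : Y := ⟨Additive.ofMul h⟩
  let f : ℤ →ₗ[ℤ] Y := LinearMap.toSpanSingleton ℤ Y a
  let g' : ℤ →ₗ[ℤ] Q := LinearMap.toSpanSingleton ℤ Q ⟨Additive.ofMul u⟩
  have hker : LinearMap.ker f ≤ LinearMap.ker g' := by
    intro k hk
    rw [LinearMap.mem_ker] at hk ⊢
    have hk' : h ^ k = 1 := by
      have h5 := congrArg (fun y : Y => Additive.toMul y.down) hk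
      have h7 : (k • (⟨Additive.ofMul h⟩ : Y)).down = k • Additive.ofMul h := rfl
      simpa [a, f, LinearMap.toSpanSingleton_apply, h7, ← ofMul_zpow] using h5
    have h6 := hupow k (hdvd k hk')
    show k • (⟨Additive.ofMul u⟩ : Q) = 0
    have : k • (Additive.ofMul u) = 0 := by
      rw [← ofMul_zpow, h6]
      rfl
    exact ULift.ext _ _ (by simpa using this)
  let e1 := f.quotKerEquivRange
  let g0 : (ℤ ⧸ LinearMap.ker f) →ₗ[ℤ] Q := Submodule.liftQ _ g' hker
  let g : LinearMap.range f →ₗ[ℤ] Q := g0 ∘ₗ e1.symm.toLinearMap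
  obtain ⟨ext, hext⟩ := inj2.out (LinearMap.range f).subtype
    (Submodule.injective_subtype _) g
  let L : Additive H →ₗ[ℤ] Additive Fˣ :=
    ULift.moduleEquiv.toLinearMap ∘ₗ ext ∘ₗ ULift.moduleEquiv.symm.toLinearMap
  let χ : H →* Fˣ := MonoidHom.toAdditive.symm L.toAddMonoidHom
  have ha1 : f 1 = a := by simp [f]
  have hmem : a ∈ LinearMap.range f := ⟨1, ha1⟩
  have hga : g ⟨a, hmem⟩ = ⟨Additive.ofMul u⟩ := by
    have h2 : e1.symm ⟨a, hmem⟩ = (LinearMap.ker f).mkQ 1 := by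
      rw [show (⟨a, hmem⟩ : LinearMap.range f) = ⟨f 1, LinearMap.mem_range_self f 1⟩ from
        Subtype.ext ha1.symm]
      exact f.quotKerEquivRange_symm_apply_image 1 _
    show g0 (e1.symm ⟨a, hmem⟩) = _
    rw [h2]
    show g' 1 = _
    simp [g']
  have h3 : ext a = ⟨Additive.ofMul u⟩ := by
    have h7 := hext ⟨a, hmem⟩
    simpa using h7.trans hga
  have hχh : χ h = u := by
    have : χ h = Additive.toMul ((ext ⟨Additive.ofMul h⟩ : Q).down) := rfl
    rw [this]
    have ha : (⟨Additive.ofMul h⟩ : Y) = a := rfl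
    rw [ha, h3]
    rfl
  exact ⟨χ, by rw [hχh]; exact hu1⟩

/-- Let `Γ : A = ⊕_{g ∈ G} ℬ g` and `Γ̄ : A = ⊕_{h ∈ H} 𝒞 h` be gradings of an algebra `A`
by abelian groups `G`, `H`, each generated by the support of its grading, over an algebraically
closed field of characteristic `p`, neither group having elements of order `p`.
If `η_Γ̄(Ĥ) ⊆ η_Γ(Ĝ)` then `Γ̄` is a coarsening of `Γ`: there is a group homomorphism
`φ : G → H` with `ℬ g ≤ 𝒞 (φ g)` for `g` in the support of `Γ`, mapping the support of `Γ`
onto the support of `Γ̄`. -/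
theorem coarsening_of_eta_subset
    {F : Type*} [Field F] [IsAlgClosed F] {p : ℕ} [CharP F p] (hp : p.Prime)
    {G H : Type*} [CommGroup G] [CommGroup H]
    (hGp : ∀ g : G, orderOf g ≠ p) (hHp : ∀ h : H, orderOf h ≠ p)
    {A : Type*} [NonUnitalNonAssocRing A] [Module F A]
    [SMulCommClass F A A] [IsScalarTower F A A]
    (ℬ : G → Submodule F A) (𝒞 : H → Submodule F A)
    (hBint : DirectSum.IsInternal ℬ) (hCint : DirectSum.IsInternal 𝒞)
    (hBmul : ∀ (g g' : G) (x y : A), x ∈ ℬ g → y ∈ ℬ g' → x * y ∈ ℬ (g * g'))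
    (hCmul : ∀ (h h' : H) (x y : A), x ∈ 𝒞 h → y ∈ 𝒞 h' → x * y ∈ 𝒞 (h * h'))
    (hBgen : Subgroup.closure {g : G | ℬ g ≠ ⊥} = ⊤)
    (hCgen : Subgroup.closure {h : H | 𝒞 h ≠ ⊥} = ⊤)
    (hsub : ∀ χ : H →* Fˣ, ∃ ζ : G →* Fˣ, ∃ e : A →ₗ[F] A,
        (∀ (g : G) (y : A), y ∈ ℬ g → e y = (ζ g : F) • y) ∧
        (∀ (h : H) (y : A), y ∈ 𝒞 h → e y = (χ h : F) • y)) :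
    ∃ φ : G →* H,
      (∀ g : G, ℬ g ≠ ⊥ → ℬ g ≤ 𝒞 (φ g)) ∧
      (∀ h : H, 𝒞 h ≠ ⊥ → ∃ g : G, ℬ g ≠ ⊥ ∧ φ g = h) := by
  classical
  choose ζ e he hC using hsub
  have sepH : ∀ h : H, (∀ χ : H →* Fˣ, χ h = 1) → h = 1 := by
    intro h hall
    by_contra hne
    obtain ⟨χ, hχ⟩ := exists_char F hp hHp hne
    exact hχ (hall χ)
  have huniq : ∀ h h' : H, (∀ χ : H →* Fˣ, (χ h : F) = (χ h' : F)) → h = h' := by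
    intro h h' hall
    have h1 : ∀ χ : H →* Fˣ, χ (h * h'⁻¹) = 1 := fun χ => by
      rw [map_mul, map_inv]
      exact mul_inv_eq_one.mpr (Units.ext (hall χ))
    have h2 := sepH _ h1
    rw [mul_inv_eq_one] at h2
    exact h2
  letI : DirectSum.Decomposition ℬ := hBint.chooseDecomposition
  letI : DirectSum.Decomposition 𝒞 := hCint.chooseDecomposition
  -- Step A
  have hA : ∀ g : G, ℬ g ≠ ⊥ →
      ∃ h : H, (∀ χ : H →* Fˣ, (χ h : F) = (ζ χ g : F)) ∧ ℬ g ≤ 𝒞 h := by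
    intro g hg
    have key : ∀ (x : A), x ∈ ℬ g → ∀ h : H, DirectSum.decompose 𝒞 x h ≠ 0 →
        ∀ χ : H →* Fˣ, (χ h : F) = (ζ χ g : F) := by
      intro x hxmem h hcomp χ
      exact comp_scalar 𝒞 (e χ) (fun h' => (χ h' : F)) (hC χ) (he χ g x hxmem) hcomp
    obtain ⟨x, hxmem, hx0⟩ := Submodule.exists_mem_ne_zero_of_ne_bot hg
    obtain ⟨h0, hh0⟩ := comp_exists 𝒞 x hx0
    refine ⟨h0, key x hxmem h0 hh0, ?_⟩
    intro x' hx'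
    rcases eq_or_ne x' 0 with rfl | hx'0
    · exact Submodule.zero_mem _
    · obtain ⟨h1, hh1⟩ := comp_exists 𝒞 x' hx'0
      have hmem1 : x' ∈ 𝒞 h1 := by
        apply mem_of_comp
        intro j hj
        by_contra hjne
        exact hj (huniq j h1 fun χ => by
          rw [key x' hx' j hjne χ, key x' hx' h1 hh1 χ])
      have : h1 = h0 := huniq h1 h0 fun χ => by
        rw [key x' hx' h1 hh1 χ, key x hxmem h0 hh0 χ]
      rwa [this] at hmem1
  -- the subgroup K
  let ψ : (H →* Fˣ) → (G × H →* Fˣ) := fun χ =>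
    ((ζ χ).comp (MonoidHom.fst G H)) / (χ.comp (MonoidHom.snd G H))
  let K : Subgroup (G × H) := ⨅ χ, (ψ χ).ker
  have hKmem : ∀ q : G × H, q ∈ K ↔ ∀ χ, ζ χ q.1 = χ q.2 := by
    intro q
    simp only [K, Subgroup.mem_iInf, MonoidHom.mem_ker, ψ, MonoidHom.div_apply,
      MonoidHom.comp_apply, MonoidHom.coe_fst, MonoidHom.coe_snd, div_eq_one]
  let π : K →* G := (MonoidHom.fst G H).comp K.subtype
  have hπinj : Function.Injective π := by
    intro k k' hkk
    have h1 : (k : G × H).1 = (k' : G × H).1 := hkk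
    have h2 : (k : G × H).2 = (k' : G × H).2 := by
      apply huniq
      intro χ
      have e1 := (hKmem _).mp k.2 χ
      have e2 := (hKmem _).mp k'.2 χ
      rw [← e1, ← e2, h1]
    exact Subtype.ext (Prod.ext h1 h2)
  have hπsurj : Function.Surjective π := by
    have hle : Subgroup.closure {g : G | ℬ g ≠ ⊥} ≤ π.range := by
      rw [Subgroup.closure_le]
      intro g hg
      obtain ⟨h0, hval, _⟩ := hA g hg
      have hk : (g, h0) ∈ K := (hKmem _).mpr fun χ => Units.ext (hval χ).symm
      exact ⟨⟨(g, h0), hk⟩, rfl⟩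
    rw [hBgen] at hle
    intro g
    exact hle (Subgroup.mem_top g)
  let eqv : K ≃* G := MulEquiv.ofBijective π ⟨hπinj, hπsurj⟩
  let φ : G →* H := (MonoidHom.snd G H).comp (K.subtype.comp eqv.symm.toMonoidHom)
  have hφ : ∀ (g : G) (χ : H →* Fˣ), ζ χ g = χ (φ g) := by
    intro g χ
    have hk := (hKmem _).mp (eqv.symm g).2 χ
    have h1 : ((eqv.symm g : K) : G × H).1 = g := by
      have h2 : π (eqv.symm g) = g := eqv.apply_symm_apply g
      exact h2
    rw [h1] at hk
    exact hk
  refine ⟨φ, ?_, ?_⟩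
  · intro g hg
    obtain ⟨h0, hval, hle⟩ := hA g hg
    have he0 : h0 = φ g := huniq _ _ fun χ => by
      rw [hval χ, hφ g χ]
    rwa [he0] at hle
  · intro h hh
    obtain ⟨y, hymem, hy0⟩ := Submodule.exists_mem_ne_zero_of_ne_bot hh
    obtain ⟨g0, hg0⟩ := comp_exists ℬ y hy0
    have hval : ∀ χ : H →* Fˣ, (ζ χ g0 : F) = (χ h : F) := fun χ =>
      comp_scalar ℬ (e χ) (fun g => (ζ χ g : F)) (he χ) (hC χ h y hymem) hg0
    refine ⟨g0, ?_, ?_⟩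
    · intro hb
      apply hg0
      have hmem := (DirectSum.decompose ℬ y g0).2
      exact Subtype.ext (by simpa [hb] using hmem)
    · exact huniq _ _ fun χ => by rw [← hφ g0 χ, hval χ]
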